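/- arXiv:1908.09199 — 4 statements merged into one kernel-verified Lean document; each statement's English description precedes it below -/
import Mathlib

section
/- For $\alpha > -1$ and $a_n = \prod_{j=1}^{n-1}(1+\alpha/j)$, the series $\sum_{n=1}^{\infty} 1/a_n^2$ converges if and only if $\alpha > 1/2$. -/
open Real Filter Asymptotics Topology

noncomputable def aProd (α : ℝ) (n : ℕ) : ℝ := ∏ j ∈ Finset.Icc 1 (n - 1), (1 + α / (j : ℝ))

lemma aProd_pos {α : ℝ} (hα : -1 < α) (n : ℕ) : 0 < aProd α n := by
  apply Finset.prod_pos
  intro j hj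
  rw [Finset.mem_Icc] at hj
  have hj1 : (1:ℝ) ≤ (j:ℝ) := by exact_mod_cast hj.1
  have hj0 : (0:ℝ) < j := by linarith
  have : 1 + α / j = ((j:ℝ) + α) / j := by field_simp
  rw [this]
  apply div_pos (by linarith) hj0

lemma aProd_key {α : ℝ} (hα : -1 < α) (m : ℕ) (hm : 1 ≤ m) :
    ((m:ℝ)+1)^α / aProd α (m+1)
      = (((m:ℝ)+1)/m)^α * (((m:ℝ)+α+1)/m) * Real.GammaSeq (α+1) m := by
  have hm0 : (0:ℝ) < m := by exact_mod_cast hm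
  have hprod : aProd α (m+1) * (∏ j ∈ Finset.Icc 1 m, (j:ℝ)) =
      ∏ j ∈ Finset.Icc 1 m, ((j:ℝ) + α) := by
    rw [aProd]
    simp only [Nat.add_sub_cancel]
    rw [← Finset.prod_mul_distrib]
    apply Finset.prod_congr rfl
    intro j hj
    rw [Finset.mem_Icc] at hj
    have hj1 : (1:ℝ) ≤ (j:ℝ) := by exact_mod_cast hj.1
    have : (j:ℝ) ≠ 0 := by linarith
    field_simp
  have hfact : (∏ j ∈ Finset.Icc 1 m, (j:ℝ)) = (m.factorial : ℝ) := by
    rw [← Nat.cast_prod]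
    congr 1
    rw [← Finset.prod_range_add_one_eq_factorial, ← Finset.Ico_add_one_right_eq_Icc, Finset.prod_Ico_eq_prod_range]
    simp [add_comm]
  have hrange : (∏ j ∈ Finset.range (m+1), (α + 1 + (j:ℝ)))
      = ((m:ℝ) + α + 1) * ∏ j ∈ Finset.Icc 1 m, ((j:ℝ) + α) := by
    rw [Finset.prod_range_succ, ← Finset.Ico_add_one_right_eq_Icc, Finset.prod_Ico_eq_prod_range,
      Nat.add_sub_cancel, mul_comm]
    congr 1
    · ring
    · apply Finset.prod_congr rfl
      intro j _
      push_cast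
      ring
  have hpos1 : ∀ j ∈ Finset.Icc 1 m, (0:ℝ) < (j:ℝ) + α := by
    intro j hj
    rw [Finset.mem_Icc] at hj
    have : (1:ℝ) ≤ (j:ℝ) := by exact_mod_cast hj.1
    linarith
  have hP : (0:ℝ) < ∏ j ∈ Finset.Icc 1 m, ((j:ℝ) + α) := Finset.prod_pos hpos1
  have hfpos : (0:ℝ) < (m.factorial : ℝ) := by exact_mod_cast Nat.factorial_pos m
  have ha : 0 < aProd α (m+1) := aProd_pos hα (m+1)
  have hma : (0:ℝ) < (m:ℝ) + α + 1 := by linarith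
  have hGS : Real.GammaSeq (α+1) m = (m:ℝ)^(α+1) * (m.factorial : ℝ)
      / (((m:ℝ) + α + 1) * ∏ j ∈ Finset.Icc 1 m, ((j:ℝ) + α)) := by
    rw [Real.GammaSeq, hrange]
  have haP : aProd α (m+1) = (∏ j ∈ Finset.Icc 1 m, ((j:ℝ) + α)) / (m.factorial : ℝ) := by
    rw [← hprod, hfact]
    field_simp
  rw [hGS, haP]
  rw [Real.div_rpow (by linarith) (le_of_lt hm0)]
  rw [Real.rpow_add_one (ne_of_gt hm0)] at *
  field_simp

lemma tendsto_rpow_div_aProd {α : ℝ} (hα : -1 < α) :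
    Tendsto (fun n : ℕ => (n:ℝ)^α / aProd α n) atTop (𝓝 (Real.Gamma (α+1))) := by
  have h1 : Tendsto (fun m : ℕ => (((m:ℝ)+1)/m)^α) atTop (𝓝 1) := by
    have : Tendsto (fun m : ℕ => ((m:ℝ)+1)/m) atTop (𝓝 1) := by
      have := Filter.Tendsto.add_atTop (tendsto_const_nhds (x := (1:ℝ)))
        tendsto_natCast_atTop_atTop
      have h := tendsto_natCast_atTop_atTop (R := ℝ)
      have : (fun m : ℕ => ((m:ℝ)+1)/m) =ᶠ[atTop] fun m : ℕ => 1 + 1/(m:ℝ) := by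
        filter_upwards [eventually_gt_atTop 0] with m hm
        have : (m:ℝ) ≠ 0 := by positivity
        field_simp
      rw [tendsto_congr' this]
      have := Filter.Tendsto.div_atTop (tendsto_const_nhds (x := (1:ℝ)))
        tendsto_natCast_atTop_atTop
      simpa using (tendsto_const_nhds (x := (1:ℝ))).add this
    have h2 := this.rpow_const (p := α) (Or.inl one_ne_zero)
    simpa using h2
  have h2 : Tendsto (fun m : ℕ => ((m:ℝ)+α+1)/m) atTop (𝓝 1) := by
    have : (fun m : ℕ => ((m:ℝ)+α+1)/m) =ᶠ[atTop] fun m : ℕ => 1 + (α+1)/(m:ℝ) := by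
      filter_upwards [eventually_gt_atTop 0] with m hm
      have : (m:ℝ) ≠ 0 := by positivity
      field_simp
      ring
    rw [tendsto_congr' this]
    have := Filter.Tendsto.div_atTop (tendsto_const_nhds (x := (α+1:ℝ)))
      tendsto_natCast_atTop_atTop
    simpa using (tendsto_const_nhds (x := (1:ℝ))).add this
  have h3 := Real.GammaSeq_tendsto_Gamma (α+1)
  have hcomb := (h1.mul h2).mul h3
  rw [one_mul, one_mul] at hcomb
  have heq : (fun m : ℕ => (((m:ℝ)+1)/m)^α * (((m:ℝ)+α+1)/m) * Real.GammaSeq (α+1) m)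
      =ᶠ[atTop] fun m : ℕ => ((m+1:ℕ):ℝ)^α / aProd α (m+1) := by
    filter_upwards [eventually_ge_atTop 1] with m hm
    rw [← aProd_key hα m hm]
    push_cast
    ring_nf
  have := (tendsto_congr' heq).mp hcomb
  exact (Filter.tendsto_add_atTop_iff_nat 1).mp this

/-- The series `∑ 1/a_n²` converges if and only if `α > 1/2`. -/
theorem summable_inv_aProd_sq_iff (α : ℝ) (hα : -1 < α) :
    Summable (fun n : ℕ => 1 / (aProd α n) ^ 2) ↔ 1 / 2 < α := by
  have hL : 0 < Real.Gamma (α+1) := Real.Gamma_pos_of_pos (by linarith)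
  set L := Real.Gamma (α+1) with hLdef
  have ht := tendsto_rpow_div_aProd hα
  have ha : ∀ n, 0 < aProd α n := aProd_pos hα
  set f : ℕ → ℝ := fun n => 1 / (aProd α n) ^ 2 with hf
  set g : ℕ → ℝ := fun n => (n:ℝ) ^ (-(2*α)) with hg
  have hdiv : Tendsto (f / g) atTop (𝓝 (L^2)) := by
    have hsq := ht.mul ht
    have heq : (fun n : ℕ => ((n:ℝ)^α / aProd α n) * ((n:ℝ)^α / aProd α n))
        =ᶠ[atTop] (f / g) := by
      filter_upwards [eventually_gt_atTop 0] with n hn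
      have hn0 : (0:ℝ) < (n:ℝ) := by exact_mod_cast hn
      have hgn : (0:ℝ) < (n:ℝ) ^ (-(2*α)) := Real.rpow_pos_of_pos hn0 _
      simp only [Pi.div_apply, hf, hg]
      have hxa : ((n:ℝ)^α) ≠ 0 := (Real.rpow_pos_of_pos hn0 α).ne'
      have han : aProd α n ≠ 0 := (ha n).ne'
      rw [Real.rpow_neg hn0.le]
      have h2a : (n:ℝ)^(2*α) = (n:ℝ)^α * (n:ℝ)^α := by
        rw [← Real.rpow_add hn0]; ring_nf
      rw [h2a]
      field_simp
    rw [← sq] at hsq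
    exact (tendsto_congr' heq).mp hsq
  have hL2 : (0:ℝ) < L^2 := by positivity
  have hgdiv : Tendsto (g / f) atTop (𝓝 (L^2)⁻¹) := by
    have h := hdiv.inv₀ hL2.ne'
    have heq : (fun x => ((f/g) x)⁻¹) = g / f := by
      funext n
      simp [Pi.inv_apply, Pi.div_apply, inv_div]
    rwa [heq] at h
  have hfO : f =O[atTop] g := by
    apply Asymptotics.isBigO_of_div_tendsto_nhds _ _ hdiv
    filter_upwards [eventually_gt_atTop 0] with n hn h0
    exact absurd h0 (Real.rpow_pos_of_pos (by exact_mod_cast hn) _).ne'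
  have hgO : g =O[atTop] f := by
    apply Asymptotics.isBigO_of_div_tendsto_nhds _ _ hgdiv
    filter_upwards with n h0
    exfalso
    have : (0:ℝ) < f n := by
      simp only [hf]
      have := ha n
      positivity
    exact this.ne' h0
  have hgs : Summable g ↔ 1/2 < α := by
    rw [hg, Real.summable_nat_rpow]
    constructor <;> intro h <;> linarith
  constructor
  · intro hs
    exact hgs.mp (summable_of_isBigO_nat hs hgO)
  · intro h
    exact summable_of_isBigO_nat (hgs.mpr h) hfO
end

section
/- Let $(X_n)$ be the minimal random walk with parameters $p, q \in [0,1]$, $s \in [0,1]$, and set $\alpha = p - q$ with $\alpha > -1$. Define $M_n = (X_n - \mathbb{E}[X_n])/a_n$ where $a_n = \Gamma(n+\alpha)/(\Gamma(n)\Gamma(1+\alpha))$. Then $(M_n)_{n\geq 1}$ is a martingale with respect to the filtration $\mathcal{F}_n = \sigma(\eta_1,\dots,\eta_n)$. -/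
open MeasureTheory ProbabilityTheory Filter Real BoundedContinuousFunction

noncomputable section

/-- The minimal random walk of Kumar–Harbola–Lindenberg: increments `η n ∈ {0,1}`,
`P(η 1 = 1) = s`, and for `n ≥ 1` the conditional expectation (i.e. conditional
probability of a forward step) given `σ(η 1, …, η n)` is `q + (p-q) X_n / n`,
where `X_n = ∑_{k=1}^n η k`. -/
structure IsMinimalRW {Ω : Type*} [MeasurableSpace Ω] (μ : Measure Ω)
    (p q s : ℝ) (η : ℕ → Ω → ℝ) : Prop where
  meas : ∀ n, Measurable (η n)
  zero : ∀ ω, η 0 ω = 0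
  vals : ∀ n, 1 ≤ n → ∀ᵐ ω ∂μ, η n ω = 0 ∨ η n ω = 1
  init : (μ {ω | η 1 ω = 1}).toReal = s
  cond : ∀ n : ℕ, 1 ≤ n →
      μ[η (n + 1) | ⨆ i ∈ Finset.Icc 1 n, MeasurableSpace.comap (η i) inferInstance]
        =ᵐ[μ] fun ω => q + (p - q) * (∑ k ∈ Finset.Icc 1 n, η k ω) / n

/-- The position of the walk, `X_n = ∑_{k=1}^n η_k`. -/
def walkPos {Ω : Type*} (η : ℕ → Ω → ℝ) (n : ℕ) (ω : Ω) : ℝ := ∑ k ∈ Finset.Icc 1 n, η k ω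

/-- The normalizing sequence `a_n = Γ(n+α)/(Γ(n)Γ(1+α))`. -/
def aSeq (α : ℝ) (n : ℕ) : ℝ := Real.Gamma (n + α) / (Real.Gamma n * Real.Gamma (1 + α))

/-- `M_n = (X_n - E[X_n])/a_n` is a martingale w.r.t. the natural filtration. -/
theorem minimalRW_martingale {Ω : Type*} [MeasurableSpace Ω] (μ : Measure Ω)
    [IsProbabilityMeasure μ] (p q s : ℝ) (hp : p ∈ Set.Icc (0:ℝ) 1) (hq : q ∈ Set.Icc (0:ℝ) 1)
    (hs : s ∈ Set.Icc (0:ℝ) 1) (hα : -1 < p - q) (η : ℕ → Ω → ℝ)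
    (hrw : IsMinimalRW μ p q s η) (hη : ∀ n, StronglyMeasurable (η n)) :
    Martingale
      (fun n ω => (walkPos η n ω - ∫ ω', walkPos η n ω' ∂μ) / aSeq (p - q) n)
      (Filtration.natural η hη) μ := by
  set α : ℝ := p - q with hαdef
  set ℱ := Filtration.natural η hη with hℱdef
  set e : ℕ → ℝ := fun n => ∫ ω', walkPos η n ω' ∂μ with he
  -- η 0 is the constant 0
  have hη0 : η 0 = fun _ => (0:ℝ) := funext hrw.zero
  -- identify the natural filtration with the Icc sup
  have hFle : ∀ k n : ℕ, k ≤ n → MeasurableSpace.comap (η k) inferInstance ≤ ℱ n := by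
    intro k n hk
    exact le_iSup₂ (f := fun j (_ : j ≤ n) => MeasurableSpace.comap (η j) inferInstance) k hk
  have hFeq : ∀ n : ℕ, ℱ n
      = ⨆ i ∈ Finset.Icc 1 n, MeasurableSpace.comap (η i) inferInstance := by
    intro n
    apply le_antisymm
    · show (⨆ j, ⨆ _ : j ≤ n, MeasurableSpace.comap (η j) inferInstance) ≤ _
      refine iSup₂_le fun j hj => ?_
      rcases Nat.eq_zero_or_pos j with h0 | h1
      · subst h0; rw [hη0, MeasurableSpace.comap_const]; exact bot_le
      · exact le_iSup₂ (f := fun i (_ : i ∈ Finset.Icc 1 n) =>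
          MeasurableSpace.comap (η i) inferInstance) j (Finset.mem_Icc.2 ⟨h1, hj⟩)
    · refine iSup₂_le fun j hj => hFle j n (Finset.mem_Icc.1 hj).2
  -- integrability of the increments
  have hint_η : ∀ n, Integrable (η n) μ := by
    intro n
    rcases Nat.eq_zero_or_pos n with h0 | h1
    · subst h0; rw [hη0]; exact integrable_const 0
    · refine (integrable_const (1:ℝ)).mono' (hη n).aestronglyMeasurable ?_
      filter_upwards [hrw.vals n h1] with ω hω
      rcases hω with h | h <;> simp [h]
  have hintX : ∀ n, Integrable (walkPos η n) μ := by
    intro n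
    have : Integrable (fun ω => ∑ k ∈ Finset.Icc 1 n, η k ω) μ :=
      integrable_finset_sum _ fun k _ => hint_η k
    exact this
  have hintM : ∀ n, Integrable
      (fun ω => (walkPos η n ω - e n) / aSeq α n) μ := by
    intro n
    exact ((hintX n).sub (integrable_const _)).div_const _
  -- X n is strongly measurable w.r.t. ℱ n
  have hXmeas : ∀ n, StronglyMeasurable[ℱ n] (walkPos η n) := by
    intro n
    have : StronglyMeasurable[ℱ n] (fun ω => ∑ k ∈ Finset.Icc 1 n, η k ω) := by
      refine Finset.stronglyMeasurable_fun_sum _ fun k hk => ?_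
      have hk' : k ≤ n := (Finset.mem_Icc.1 hk).2
      have hm : Measurable[MeasurableSpace.comap (η k) inferInstance] (η k) :=
        Measurable.of_comap_le le_rfl
      exact (hm.mono (hFle k n hk') le_rfl).stronglyMeasurable
    exact this
  have hMmeas : ∀ (n : ℕ) (c a : ℝ), StronglyMeasurable[ℱ n]
      (fun ω => (walkPos η n ω - c) / a) := by
    intro n c a
    have : (fun ω => (walkPos η n ω - c) / a) = fun ω => (walkPos η n ω - c) * a⁻¹ := by
      funext ω; rw [div_eq_mul_inv]
    rw [this]
    exact ((hXmeas n).sub stronglyMeasurable_const).mul stronglyMeasurable_const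
  -- facts about α and a
  have hn_pos : ∀ n : ℕ, 1 ≤ n → (0:ℝ) < n + α := by
    intro n hn
    have : (1:ℝ) ≤ n := by exact_mod_cast hn
    linarith
  have ha_pos : ∀ n : ℕ, 1 ≤ n → 0 < aSeq α n := by
    intro n hn
    have h1 : (0:ℝ) < Real.Gamma (n + α) := Real.Gamma_pos_of_pos (hn_pos n hn)
    have h2 : (0:ℝ) < Real.Gamma n :=
      Real.Gamma_pos_of_pos (by exact_mod_cast Nat.lt_of_lt_of_le Nat.zero_lt_one hn)
    have h3 : (0:ℝ) < Real.Gamma (1 + α) := Real.Gamma_pos_of_pos (by linarith)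
    exact div_pos h1 (mul_pos h2 h3)
  have ha_rec : ∀ n : ℕ, 1 ≤ n → aSeq α (n + 1) = aSeq α n * ((n + α) / n) := by
    intro n hn
    have hnR : (0:ℝ) < n := by exact_mod_cast Nat.lt_of_lt_of_le Nat.zero_lt_one hn
    have h1 : ((n:ℝ) + 1) + α = (n + α) + 1 := by ring
    have h2 : Real.Gamma (((n:ℝ) + 1) + α) = (n + α) * Real.Gamma (n + α) := by
      rw [h1, Real.Gamma_add_one (hn_pos n hn).ne']
    have h3 : Real.Gamma ((n:ℝ) + 1) = n * Real.Gamma n := Real.Gamma_add_one hnR.ne'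
    have hΓn : (0:ℝ) < Real.Gamma n := Real.Gamma_pos_of_pos hnR
    have hΓα : (0:ℝ) < Real.Gamma (1 + α) := Real.Gamma_pos_of_pos (by linarith)
    simp only [aSeq, Nat.cast_add, Nat.cast_one]
    rw [h2, h3]
    field_simp
  -- sum recursion
  have hXsucc : ∀ n : ℕ, ∀ ω, walkPos η (n + 1) ω = walkPos η n ω + η (n + 1) ω := by
    intro n ω
    exact Finset.sum_Icc_succ_top (Nat.le_add_left 1 n) _
  -- apply martingale_nat
  refine martingale_nat ?_ hintM ?_
  · exact fun n => hMmeas n (e n) (aSeq α n)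
  · intro n
    rcases Nat.eq_zero_or_pos n with h0 | h1
    · -- base case n = 0
      subst h0
      have hF0 : ℱ 0 = ⊥ := by
        apply le_antisymm _ bot_le
        show (⨆ j, ⨆ _ : j ≤ 0, MeasurableSpace.comap (η j) inferInstance) ≤ ⊥
        refine iSup₂_le fun j hj => ?_
        have : j = 0 := Nat.le_zero.1 hj
        subst this
        rw [hη0, MeasurableSpace.comap_const]
      rw [hF0, condExp_bot]
      have hX0 : ∀ ω, walkPos η 0 ω = 0 := by intro ω; simp [walkPos]
      have he0 : e 0 = 0 := by simp [he, walkPos]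
      have hI : ∫ ω, (walkPos η 1 ω - e 1) / aSeq α 1 ∂μ = 0 := by
        rw [integral_div, integral_sub (hintX 1) (integrable_const _),
          integral_const]
        simp [he]
      refine Filter.Eventually.of_forall fun ω => ?_
      simp only [hI]
      rw [show walkPos η 0 ω = 0 from hX0 ω]
      simp [walkPos]
      have hI' := hI
      simp only [walkPos, he, Finset.Icc_self, Finset.sum_singleton] at hI'
      exact hI'.symm
    · -- inductive step, n ≥ 1
      have hnR : (0:ℝ) < n := by exact_mod_cast Nat.lt_of_lt_of_le Nat.zero_lt_one h1
      have hcond : μ[η (n + 1) | ℱ n]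
          =ᵐ[μ] fun ω => q + α * walkPos η n ω / n := by
        rw [hFeq n]
        exact hrw.cond n h1
      -- integral of η (n+1)
      have hIη : ∫ ω, η (n + 1) ω ∂μ = q + α * e n / n := by
        rw [← integral_condExp (ℱ.le n) (f := η (n + 1)), integral_congr_ae hcond]
        have : Integrable (fun ω => α * walkPos η n ω / (n:ℝ)) μ :=
          (((hintX n).const_mul α).div_const _)
        rw [integral_add (integrable_const q) this, integral_const]
        simp only [measure_univ, probReal_univ, ENNReal.toReal_one, smul_eq_mul, one_mul]
        rw [integral_div, integral_const_mul]
      have heRec : e (n + 1) = e n + (q + α * e n / n) := by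
        have : e (n + 1) = ∫ ω, (walkPos η n ω + η (n + 1) ω) ∂μ := by
          apply integral_congr_ae
          exact Filter.Eventually.of_forall fun ω => hXsucc n ω
        rw [this, integral_add (hintX n) (hint_η (n + 1)), hIη]
      -- decompose M (n+1)
      have hdecomp : (fun ω => (walkPos η (n + 1) ω - e (n + 1)) / aSeq α (n + 1))
          = (fun ω => (walkPos η n ω - e (n + 1)) / aSeq α (n + 1))
            + (aSeq α (n + 1))⁻¹ • η (n + 1) := by
        funext ω
        simp only [Pi.add_apply, Pi.smul_apply, smul_eq_mul, hXsucc n ω]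
        field_simp
        ring
      have hintg : Integrable (fun ω => (walkPos η n ω - e (n + 1)) / aSeq α (n + 1)) μ :=
        ((hintX n).sub (integrable_const _)).div_const _
      have hints : Integrable ((aSeq α (n + 1))⁻¹ • η (n + 1)) μ :=
        (hint_η (n + 1)).smul _
      have hcexp1 : μ[(fun ω => (walkPos η n ω - e (n + 1)) / aSeq α (n + 1)) | ℱ n]
          =ᵐ[μ] fun ω => (walkPos η n ω - e (n + 1)) / aSeq α (n + 1) :=
        Filter.EventuallyEq.of_eq (condExp_of_stronglyMeasurable (ℱ.le n)
          (hMmeas n (e (n + 1)) (aSeq α (n + 1))) hintg)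
      have hcexp2 : μ[(aSeq α (n + 1))⁻¹ • η (n + 1) | ℱ n]
          =ᵐ[μ] (aSeq α (n + 1))⁻¹ • (fun ω => q + α * walkPos η n ω / n) := by
        refine (condExp_smul ((aSeq α (n + 1))⁻¹) (η (n + 1)) (ℱ n)).trans ?_
        filter_upwards [hcond] with ω hω
        simp [hω]
      have hstep : μ[(fun ω => (walkPos η (n + 1) ω - e (n + 1)) / aSeq α (n + 1)) | ℱ n]
          =ᵐ[μ] fun ω => (walkPos η n ω - e n) / aSeq α n := by
        rw [hdecomp]
        refine (condExp_add hintg hints (ℱ n)).trans ?_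
        filter_upwards [hcexp1, hcexp2] with ω h1' h2'
        simp only [Pi.add_apply, h1', h2', Pi.smul_apply, smul_eq_mul]
        rw [heRec, ha_rec n h1]
        have hane : aSeq α n ≠ 0 := (ha_pos n h1).ne'
        have hnαne : (n:ℝ) + α ≠ 0 := (hn_pos n h1).ne'
        field_simp
        ring
      exact hstep.symm
end
end

section
/- Let $(X_n)$ be the minimal random walk with $\alpha = p - q \in [-1, 1)$. Then $\lim_{n\to\infty} X_n/n = q/(1-\alpha)$ almost surely. -/
open MeasureTheory ProbabilityTheory Filter Real BoundedContinuousFunction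

noncomputable section

set_option maxHeartbeats 1000000 in
lemma aux_det (z : ℕ → ℝ) (hz : ∀ n : ℕ, 1 ≤ n → |z (n + 1) - z n| ≤ 2 / (n + 1))
    (hsum : Summable fun n : ℕ => z n ^ 2 / (n + 1)) :
    Tendsto z atTop (nhds 0) := by
  by_contra hcon
  rw [Metric.tendsto_atTop] at hcon
  push_neg at hcon
  obtain ⟨ε₀, hε₀, hfreq⟩ := hcon
  set ε := min ε₀ 1 with hεdef
  have hε : 0 < ε := lt_min hε₀ one_pos
  have hε1 : ε ≤ 1 := min_le_right _ _
  have hfreq' : ∀ N : ℕ, ∃ n ≥ N, ε ≤ |z n| := by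
    intro N
    obtain ⟨n, hn, h⟩ := hfreq N
    exact ⟨n, hn, le_trans (min_le_left _ _) (by simpa [Real.dist_eq] using h)⟩
  set K : ℕ := ⌈(4 : ℝ) / ε⌉₊ with hKdef
  have hK0 : 0 < K := Nat.ceil_pos.2 (by positivity)
  have hKge : (4 : ℝ) / ε ≤ K := Nat.le_ceil _
  have hKε : 4 ≤ (K : ℝ) * ε := by
    rw [div_le_iff₀ hε] at hKge; linarith
  set κ : ℝ := ε ^ 2 / (12 * K) with hκdef
  have hκ : 0 < κ := by positivity
  -- tails of the summable series tend to 0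
  have htail := tendsto_sum_nat_add (f := fun n : ℕ => z n ^ 2 / (n + 1))
  have hev : ∀ᶠ i in atTop, (∑' k : ℕ, z (k + i) ^ 2 / ((k + i : ℕ) + 1)) < κ :=
    htail.eventually (gt_mem_nhds hκ)
  obtain ⟨N₀, hN₀⟩ := eventually_atTop.1 hev
  obtain ⟨n, hn, hzn⟩ := hfreq' (max (max N₀ K) 1)
  have hn1 : 1 ≤ n := le_trans (le_max_right _ _) hn
  have hnR : (1 : ℝ) ≤ n := by exact_mod_cast hn1
  have hnN₀ : N₀ ≤ n := le_trans (le_trans (le_max_left _ _) (le_max_left _ _)) hn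
  have hnK : K ≤ n := le_trans (le_trans (le_max_right _ _) (le_max_left _ _)) hn
  set k : ℕ := n / K with hkdef
  have hk_le : (k : ℝ) ≤ (n : ℝ) * ε / 4 := by
    have h1 : (k : ℝ) ≤ (n : ℝ) / K := Nat.cast_div_le
    have h2 : (n : ℝ) / K ≤ (n : ℝ) * ε / 4 := by
      rw [div_le_div_iff₀ (by exact_mod_cast hK0) (by norm_num)]
      have : (0 : ℝ) ≤ n := Nat.cast_nonneg n
      nlinarith
    linarith
  have hk_ge : (n : ℝ) / K ≤ (k : ℝ) + 1 := by
    have h2 : (n : ℝ) < (K : ℝ) * ((k : ℝ) + 1) := by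
      exact_mod_cast Nat.lt_mul_div_succ n hK0
    rw [div_le_iff₀ (by exact_mod_cast hK0)]
    linarith
  have hkn : k ≤ n := Nat.div_le_self n K
  have hknR : (k : ℝ) ≤ n := by exact_mod_cast hkn
  -- on the block [n, n+k] the sequence stays ≥ ε/2 in absolute value
  have hblock : ∀ j : ℕ, j ≤ k → |z (n + j) - z n| ≤ 2 * j / (n + 1) := by
    intro j hj
    induction j with
    | zero => simp
    | succ j ih =>
      have hj' : j ≤ k := Nat.le_of_succ_le hj
      have h1 := ih hj'
      have h2 : |z (n + j + 1) - z (n + j)| ≤ 2 / ((n + j : ℕ) + 1) :=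
        hz (n + j) (le_trans hn1 (Nat.le_add_right _ _))
      have h3 : (2 : ℝ) / ((n : ℝ) + j + 1) ≤ 2 / (n + 1) := by
        apply div_le_div_of_nonneg_left (by norm_num) (by positivity)
        linarith [Nat.cast_nonneg (α := ℝ) j]
      have h4 : |z (n + (j + 1)) - z n| ≤ |z (n + j + 1) - z (n + j)| + |z (n + j) - z n| := by
        have he : z (n + (j + 1)) - z n = (z (n + j + 1) - z (n + j)) + (z (n + j) - z n) := by
          rw [show n + (j + 1) = n + j + 1 from rfl]; ring
        rw [he]; exact abs_add_le _ _
      push_cast at h1 h2 ⊢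
      calc |z (n + (j + 1)) - z n| ≤ 2 / ((n : ℝ) + j + 1) + 2 * j / (n + 1) := by linarith
        _ ≤ 2 / (n + 1) + 2 * j / (n + 1) := by linarith
        _ = 2 * (j + 1) / (n + 1) := by ring
  have habs : ∀ j : ℕ, j ≤ k → ε / 2 ≤ |z (n + j)| := by
    intro j hj
    have h1 := hblock j hj
    have hjk : (j : ℝ) ≤ k := by exact_mod_cast hj
    have h2 : 2 * (j : ℝ) / (n + 1) ≤ 2 * (k : ℝ) / (n + 1) := by
      apply div_le_div_of_nonneg_right ?_ (by positivity)
      linarith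
    have h3 : 2 * (k : ℝ) / (n + 1) ≤ ε / 2 := by
      rw [div_le_div_iff₀ (by positivity) (by norm_num)]
      nlinarith
    have h4 : |z (n + j) - z n| ≤ ε / 2 := le_trans h1 (le_trans h2 h3)
    have h5 : |z n| - |z (n + j)| ≤ |z (n + j) - z n| := by
      have := abs_sub_abs_le_abs_sub (z n) (z (n + j))
      rwa [abs_sub_comm (z n)] at this
    linarith
  -- each block term is at least ε²/(12 n)
  have hterm : ∀ j : ℕ, j ≤ k → ε ^ 2 / (12 * n) ≤ z (n + j) ^ 2 / ((n + j : ℕ) + 1) := by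
    intro j hj
    have h1 : ε / 2 ≤ |z (n + j)| := habs j hj
    have h2 : (ε / 2) ^ 2 ≤ z (n + j) ^ 2 := by
      have := sq_abs (z (n + j)); nlinarith [abs_nonneg (z (n + j))]
    have h3 : ((n + j : ℕ) : ℝ) + 1 ≤ 3 * n := by
      push_cast
      have : (j : ℝ) ≤ n := le_trans (by exact_mod_cast hj) hknR
      linarith
    calc ε ^ 2 / (12 * n) = (ε / 2) ^ 2 / (3 * n) := by ring
      _ ≤ z (n + j) ^ 2 / (3 * n) := by
          apply div_le_div_of_nonneg_right h2 (by positivity) |>.trans_eq rfl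
      _ ≤ z (n + j) ^ 2 / (((n + j : ℕ) : ℝ) + 1) := by
          apply div_le_div_of_nonneg_left (by positivity) (by positivity) h3
  -- sum over the block
  have hsum_shift : Summable fun j : ℕ => z (j + n) ^ 2 / ((j + n : ℕ) + 1) :=
    (summable_nat_add_iff n).2 hsum
  have hblocksum : κ ≤ ∑ j ∈ Finset.range (k + 1), z (n + j) ^ 2 / ((n + j : ℕ) + 1) := by
    have h1 : (k + 1 : ℝ) * (ε ^ 2 / (12 * n)) ≤
        ∑ j ∈ Finset.range (k + 1), z (n + j) ^ 2 / ((n + j : ℕ) + 1) := by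
      have := Finset.sum_le_sum (f := fun _ : ℕ => ε ^ 2 / (12 * n))
        (g := fun j : ℕ => z (n + j) ^ 2 / ((n + j : ℕ) + 1)) (s := Finset.range (k + 1))
        (fun j hj => hterm j (Nat.lt_succ_iff.1 (Finset.mem_range.1 hj)))
      simpa [Finset.sum_const, Finset.card_range, mul_comm] using this
    have h2 : κ ≤ (k + 1 : ℝ) * (ε ^ 2 / (12 * n)) := by
      have hK' : (0 : ℝ) < K := by exact_mod_cast hK0
      have hle : (n : ℝ) ≤ ((k : ℝ) + 1) * K := by
        rw [div_le_iff₀ hK'] at hk_ge; linarith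
      rw [hκdef, ← mul_div_assoc]
      rw [div_le_div_iff₀ (by positivity) (by positivity)]
      nlinarith [sq_nonneg ε]
    linarith
  -- but the block sum is at most the tail, which is < κ
  have htail_lt : (∑' j : ℕ, z (j + n) ^ 2 / ((j + n : ℕ) + 1)) < κ := hN₀ n hnN₀
  have hble : (∑ j ∈ Finset.range (k + 1), z (n + j) ^ 2 / ((n + j : ℕ) + 1)) ≤
      ∑' j : ℕ, z (j + n) ^ 2 / ((j + n : ℕ) + 1) := by
    have := Summable.sum_le_tsum (Finset.range (k + 1))
      (fun j _ => by positivity : ∀ j ∉ Finset.range (k + 1),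
        0 ≤ z (j + n) ^ 2 / ((j + n : ℕ) + 1)) hsum_shift
    simpa [Nat.add_comm] using this
  linarith

set_option maxHeartbeats 1000000 in
/-- Strong law of large numbers for the minimal random walk. -/
theorem minimalRW_slln {Ω : Type*} [MeasurableSpace Ω] (μ : Measure Ω)
    [IsProbabilityMeasure μ] (p q s : ℝ) (hp : p ∈ Set.Icc (0:ℝ) 1) (hq : q ∈ Set.Icc (0:ℝ) 1)
    (hs : s ∈ Set.Icc (0:ℝ) 1) (hα₁ : -1 ≤ p - q) (hα₂ : p - q < 1) (η : ℕ → Ω → ℝ)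
    (hrw : IsMinimalRW μ p q s η) :
    ∀ᵐ ω ∂μ, Tendsto (fun n : ℕ => walkPos η n ω / n) atTop
      (nhds (q / (1 - (p - q)))) := by
  obtain ⟨hp0, hp1⟩ := hp
  obtain ⟨hq0, hq1⟩ := hq
  set c : ℝ := 1 - (p - q) with hcdef
  have hc : 0 < c := by rw [hcdef]; linarith
  set L : ℝ := q / (1 - (p - q)) with hLdef
  have hLc : c * L = q := by
    rw [hLdef, ← hcdef]; field_simp
  have hL0 : 0 ≤ L := by rw [hLdef, ← hcdef]; positivity
  have hL1 : L ≤ 1 := by rw [hLdef, ← hcdef, div_le_one hc]; rw [hcdef]; linarith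
  set X : ℕ → Ω → ℝ := fun n ω => ∑ k ∈ Finset.Icc 1 n, η k ω with hXdef
  set Z : ℕ → Ω → ℝ := fun n ω => X n ω / n - L with hZdef
  set F : ℕ → MeasurableSpace Ω :=
    fun n => ⨆ i ∈ Finset.Icc 1 n, MeasurableSpace.comap (η i) inferInstance with hFdef
  -- measurability
  have hFle : ∀ n, F n ≤ ‹MeasurableSpace Ω› := fun n =>
    iSup₂_le fun i _ => measurable_iff_comap_le.1 (hrw.meas i)
  have hηF : ∀ n, ∀ i ∈ Finset.Icc 1 n, Measurable[F n] (η i) := by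
    intro n i hi
    rw [measurable_iff_comap_le]
    exact le_iSup₂ (f := fun i (_ : i ∈ Finset.Icc 1 n) =>
      MeasurableSpace.comap (η i) inferInstance) i hi
  have hXF : ∀ n, Measurable[F n] (X n) := fun n =>
    Finset.measurable_sum _ (fun i hi => hηF n i hi)
  have hXm : ∀ n, Measurable (X n) := fun n =>
    Finset.measurable_sum _ (fun i _ => hrw.meas i)
  have hZF : ∀ n, Measurable[F n] (Z n) := fun n => ((hXF n).div_const _).sub_const _
  have hZm : ∀ n, Measurable (Z n) := fun n => ((hXm n).div_const _).sub_const _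
  -- a.e. 0/1 values
  have hη01 : ∀ᵐ ω ∂μ, ∀ n : ℕ, 1 ≤ n → (η n ω = 0 ∨ η n ω = 1) := by
    rw [ae_all_iff]
    intro n
    by_cases hn : 1 ≤ n
    · filter_upwards [hrw.vals n hn] with ω h _; exact h
    · filter_upwards with ω h; exact absurd h hn
  -- pointwise bounds on the good set
  have hXbd : ∀ ω, (∀ k, 1 ≤ k → (η k ω = 0 ∨ η k ω = 1)) →
      ∀ n, 0 ≤ X n ω ∧ X n ω ≤ n := by
    intro ω hω n
    constructor
    · apply Finset.sum_nonneg
      intro k hk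
      rcases hω k (Finset.mem_Icc.1 hk).1 with h | h <;> simp [h]
    · calc X n ω ≤ ∑ _k ∈ Finset.Icc 1 n, (1 : ℝ) := by
            apply Finset.sum_le_sum
            intro k hk
            rcases hω k (Finset.mem_Icc.1 hk).1 with h | h <;> simp [h]
        _ = n := by simp
  have hZbd : ∀ ω, (∀ k, 1 ≤ k → (η k ω = 0 ∨ η k ω = 1)) → ∀ n, |Z n ω| ≤ 1 := by
    intro ω hω n
    rcases Nat.eq_zero_or_pos n with h0 | hpos
    · subst h0
      have : X 0 ω = 0 := by simp [hXdef]
      rw [hZdef]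
      simp only [this, Nat.cast_zero, div_zero, zero_sub, abs_neg]
      rw [abs_of_nonneg hL0]; exact hL1
    · obtain ⟨h1, h2⟩ := hXbd ω hω n
      have hn : (0:ℝ) < n := by exact_mod_cast hpos
      have h3 : 0 ≤ X n ω / n := div_nonneg h1 hn.le
      have h4 : X n ω / n ≤ 1 := (div_le_one hn).2 h2
      rw [hZdef, abs_le]
      constructor <;> simp only <;> linarith
  -- integrability helper
  have intb : ∀ (f : Ω → ℝ) (C : ℝ), Measurable f → (∀ᵐ ω ∂μ, |f ω| ≤ C) →
      Integrable f μ := fun f C hf hbd =>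
    Integrable.mono' (integrable_const C) hf.aestronglyMeasurable
      (by filter_upwards [hbd] with ω h; simpa [Real.norm_eq_abs] using h)
  have hηbd : ∀ n : ℕ, 1 ≤ n → ∀ᵐ ω ∂μ, |η n ω| ≤ 1 := by
    intro n hn
    filter_upwards [hrw.vals n hn] with ω h
    rcases h with h | h <;> simp [h]
  have hηint : ∀ n : ℕ, 1 ≤ n → Integrable (η n) μ := fun n hn =>
    intb _ 1 (hrw.meas n) (hηbd n hn)
  have hZsq_int : ∀ n, Integrable (fun ω => Z n ω ^ 2) μ := by
    intro n
    apply intb _ 1 ((hZm n).pow_const 2)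
    filter_upwards [hη01] with ω h
    have := hZbd ω h n
    rw [abs_pow]
    calc |Z n ω| ^ 2 ≤ 1 ^ 2 := pow_le_pow_left₀ (abs_nonneg _) this 2
      _ = 1 := one_pow 2
  -- key conditional expectation identity
  have hkey : ∀ n : ℕ, 1 ≤ n →
      ∫ ω, Z n ω * η (n + 1) ω ∂μ = ∫ ω, Z n ω * (q + (p - q) * X n ω / n) ∂μ := by
    intro n hn
    have hm := hFle n
    have hint1 : Integrable (η (n + 1)) μ := hηint (n + 1) (by omega)
    have hint2 : Integrable (Z n * η (n + 1)) μ := by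
      apply intb _ 1 ((hZm n).mul (hrw.meas (n + 1)))
      filter_upwards [hη01] with ω h
      have h1 := hZbd ω h n
      have h2 : |η (n + 1) ω| ≤ 1 := by
        rcases h (n + 1) (by omega) with h' | h' <;> simp [h']
      calc |(Z n * η (n + 1)) ω| = |Z n ω| * |η (n + 1) ω| := abs_mul _ _
        _ ≤ 1 * 1 := mul_le_mul h1 h2 (abs_nonneg _) zero_le_one
        _ = 1 := one_mul 1
    have hmul := condExp_mul_of_stronglyMeasurable_left (μ := μ) (m := F n)
      (hZF n).stronglyMeasurable hint2 hint1
    have hcond : μ[η (n + 1)|F n] =ᵐ[μ] (fun ω => q + (p - q) * X n ω / n) :=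
      hrw.cond n hn
    calc ∫ ω, Z n ω * η (n + 1) ω ∂μ
        = ∫ ω, (μ[Z n * η (n + 1)| F n]) ω ∂μ := (integral_condExp hm).symm
      _ = ∫ ω, (Z n * μ[η (n + 1)|F n]) ω ∂μ := integral_congr_ae hmul
      _ = ∫ ω, Z n ω * (q + (p - q) * X n ω / n) ∂μ := by
          apply integral_congr_ae
          filter_upwards [hcond] with ω h
          simp only [Pi.mul_apply]
          rw [h]
  -- one-step evolution of Z
  have hZsucc : ∀ n : ℕ, 1 ≤ n → ∀ ω,
      Z (n + 1) ω = Z n ω + (η (n + 1) ω - X n ω / n) / (n + 1) := by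
    intro n hn ω
    have hX : X (n + 1) ω = X n ω + η (n + 1) ω := by
      simp only [hXdef]
      rw [Finset.sum_Icc_succ_top (by omega : 1 ≤ n + 1)]
    have hn0 : (n : ℝ) ≠ 0 := by
      have : (1:ℝ) ≤ n := by exact_mod_cast hn
      linarith
    have hn1 : ((n : ℝ) + 1) ≠ 0 := by positivity
    simp only [hZdef, hX]
    push_cast
    field_simp
    ring
  -- the second moment sequence
  set e : ℕ → ℝ := fun n => ∫ ω, Z n ω ^ 2 ∂μ with hedef
  have he0 : ∀ n, 0 ≤ e n := fun n => integral_nonneg (fun ω => sq_nonneg _)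
  have heb : ∀ n, e n ≤ 1 := by
    intro n
    rw [hedef]
    calc ∫ ω, Z n ω ^ 2 ∂μ ≤ ∫ _ω, (1:ℝ) ∂μ := by
          apply integral_mono_ae (hZsq_int n) (integrable_const 1)
          filter_upwards [hη01] with ω h
          have := hZbd ω h n
          calc Z n ω ^ 2 = |Z n ω| ^ 2 := (sq_abs _).symm
            _ ≤ 1 ^ 2 := pow_le_pow_left₀ (abs_nonneg _) this 2
            _ = 1 := one_pow 2
      _ = 1 := by simp
  -- the recursion
  have hrec : ∀ n : ℕ, 1 ≤ n →
      e (n + 1) ≤ e n - 2 * c * e n / (n + 1) + 4 / ((n : ℝ) + 1) ^ 2 := by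
    intro n hn
    have hn0 : (0 : ℝ) < n := by exact_mod_cast hn
    -- D bounds
    have hDbd : ∀ᵐ ω ∂μ, |η (n + 1) ω - X n ω / n| ≤ 2 := by
      filter_upwards [hη01] with ω h
      have h1 : |η (n + 1) ω| ≤ 1 := by
        rcases h (n + 1) (by omega) with h' | h' <;> simp [h']
      obtain ⟨hx0, hx1⟩ := hXbd ω h n
      have h2 : 0 ≤ X n ω / n := div_nonneg hx0 hn0.le
      have h3 : X n ω / n ≤ 1 := (div_le_one hn0).2 hx1
      have := abs_sub (η (n + 1) ω) (X n ω / n)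
      have h4 : |X n ω / n| ≤ 1 := by rw [abs_of_nonneg h2]; exact h3
      calc |η (n + 1) ω - X n ω / n| ≤ |η (n + 1) ω| + |X n ω / n| := abs_sub _ _
        _ ≤ 1 + 1 := add_le_add h1 h4
        _ = 2 := by norm_num
    have hDm : Measurable (fun ω => η (n + 1) ω - X n ω / n) :=
      (hrw.meas (n + 1)).sub ((hXm n).div_const _)
    have hZbd' : ∀ᵐ ω ∂μ, |Z n ω| ≤ 1 := by
      filter_upwards [hη01] with ω h; exact hZbd ω h n
    -- integrability of pieces
    have hI2 : Integrable (fun ω => (2 / ((n:ℝ) + 1)) *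
        (Z n ω * (η (n + 1) ω - X n ω / n))) μ := by
      apply intb _ (2 / ((n:ℝ) + 1) * 2) (measurable_const.mul ((hZm n).mul hDm))
      filter_upwards [hDbd, hZbd'] with ω h1 h2
      simp only [Pi.mul_apply]
      rw [abs_mul, abs_mul]
      have hpos : (0:ℝ) ≤ 2 / ((n:ℝ) + 1) := by positivity
      rw [abs_of_nonneg hpos]
      apply mul_le_mul_of_nonneg_left _ hpos
      calc |Z n ω| * |η (n + 1) ω - X n ω / n| ≤ 1 * 2 :=
            mul_le_mul h2 h1 (abs_nonneg _) zero_le_one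
        _ = 2 := one_mul 2
    have hI3 : Integrable (fun ω => (1 / ((n:ℝ) + 1) ^ 2) *
        (η (n + 1) ω - X n ω / n) ^ 2) μ := by
      apply intb _ (1 / ((n:ℝ) + 1) ^ 2 * 4) (measurable_const.mul (hDm.pow_const 2))
      filter_upwards [hDbd] with ω h1
      simp only [Pi.mul_apply]
      rw [abs_mul]
      have hpos : (0:ℝ) ≤ 1 / ((n:ℝ) + 1) ^ 2 := by positivity
      rw [abs_of_nonneg hpos]
      apply mul_le_mul_of_nonneg_left _ hpos
      rw [abs_pow]
      calc |η (n + 1) ω - X n ω / n| ^ 2 ≤ 2 ^ 2 := pow_le_pow_left₀ (abs_nonneg _) h1 2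
        _ = 4 := by norm_num
    -- expansion of e (n+1)
    have hI23 : Integrable (fun ω => (2 / ((n:ℝ) + 1)) *
        (Z n ω * (η (n + 1) ω - X n ω / n)) +
        (1 / ((n:ℝ) + 1) ^ 2) * (η (n + 1) ω - X n ω / n) ^ 2) μ := hI2.add hI3
    have hexp : e (n + 1) = e n + ((2 / ((n:ℝ) + 1)) *
        ∫ ω, Z n ω * (η (n + 1) ω - X n ω / n) ∂μ +
        (1 / ((n:ℝ) + 1) ^ 2) * ∫ ω, (η (n + 1) ω - X n ω / n) ^ 2 ∂μ) := by
      calc e (n + 1)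
          = ∫ ω, (Z n ω ^ 2 + ((2 / ((n:ℝ) + 1)) *
              (Z n ω * (η (n + 1) ω - X n ω / n)) +
              (1 / ((n:ℝ) + 1) ^ 2) * (η (n + 1) ω - X n ω / n) ^ 2)) ∂μ := by
            apply integral_congr_ae
            filter_upwards with ω
            rw [hZsucc n hn ω]
            have hne : ((n:ℝ) + 1) ≠ 0 := by positivity
            field_simp
            ring
        _ = (∫ ω, Z n ω ^ 2 ∂μ) + ∫ ω, ((2 / ((n:ℝ) + 1)) *
              (Z n ω * (η (n + 1) ω - X n ω / n)) +
              (1 / ((n:ℝ) + 1) ^ 2) * (η (n + 1) ω - X n ω / n) ^ 2) ∂μ :=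
            integral_add (hZsq_int n) hI23
        _ = (∫ ω, Z n ω ^ 2 ∂μ) + ((∫ ω, (2 / ((n:ℝ) + 1)) *
              (Z n ω * (η (n + 1) ω - X n ω / n)) ∂μ) +
              ∫ ω, (1 / ((n:ℝ) + 1) ^ 2) * (η (n + 1) ω - X n ω / n) ^ 2 ∂μ) :=
            congrArg (fun t => (∫ ω, Z n ω ^ 2 ∂μ) + t) (integral_add hI2 hI3)
        _ = e n + ((2 / ((n:ℝ) + 1)) *
              ∫ ω, Z n ω * (η (n + 1) ω - X n ω / n) ∂μ +
              (1 / ((n:ℝ) + 1) ^ 2) * ∫ ω, (η (n + 1) ω - X n ω / n) ^ 2 ∂μ) := by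
            rw [integral_const_mul, integral_const_mul]
    -- the cross term
    have hZX_int : Integrable (fun ω => Z n ω * (X n ω / n)) μ := by
      apply intb _ 1 ((hZm n).mul ((hXm n).div_const _))
      filter_upwards [hη01] with ω h
      obtain ⟨hx0, hx1⟩ := hXbd ω h n
      have h2 : |X n ω / n| ≤ 1 := by
        rw [abs_of_nonneg (div_nonneg hx0 hn0.le)]
        exact (div_le_one hn0).2 hx1
      simp only [Pi.mul_apply]
      rw [abs_mul]
      calc |Z n ω| * |X n ω / n| ≤ 1 * 1 :=
            mul_le_mul (hZbd ω h n) h2 (abs_nonneg _) zero_le_one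
        _ = 1 := one_mul 1
    have hZη_int : Integrable (fun ω => Z n ω * η (n + 1) ω) μ := by
      apply intb _ 1 ((hZm n).mul (hrw.meas (n + 1)))
      filter_upwards [hη01] with ω h
      have h2 : |η (n + 1) ω| ≤ 1 := by
        rcases h (n + 1) (by omega) with h' | h' <;> simp [h']
      simp only [Pi.mul_apply]
      rw [abs_mul]
      calc |Z n ω| * |η (n + 1) ω| ≤ 1 * 1 :=
            mul_le_mul (hZbd ω h n) h2 (abs_nonneg _) zero_le_one
        _ = 1 := one_mul 1
    have hZq_int : Integrable (fun ω => Z n ω * (q + (p - q) * X n ω / n)) μ := by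
      apply intb _ 3 ((hZm n).mul (measurable_const.add
        ((measurable_const.mul (hXm n)).div_const _)))
      filter_upwards [hη01] with ω h
      obtain ⟨hx0, hx1⟩ := hXbd ω h n
      have h2 : |X n ω / n| ≤ 1 := by
        rw [abs_of_nonneg (div_nonneg hx0 hn0.le)]
        exact (div_le_one hn0).2 hx1
      have h3 : |q + (p - q) * X n ω / n| ≤ 3 := by
        have h4 : |(p - q) * X n ω / n| ≤ 2 := by
          rw [mul_div_assoc, abs_mul]
          calc |p - q| * |X n ω / n| ≤ 2 * 1 := by
                apply mul_le_mul _ h2 (abs_nonneg _) (by norm_num)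
                rw [abs_le]; constructor <;> linarith
            _ = 2 := by norm_num
        calc |q + (p - q) * X n ω / n| ≤ |q| + |(p - q) * X n ω / n| := abs_add_le _ _
          _ ≤ 1 + 2 := add_le_add (by rw [abs_of_nonneg hq0]; exact hq1) h4
          _ = 3 := by norm_num
      simp only [Pi.mul_apply]
      rw [abs_mul]
      calc |Z n ω| * |q + (p - q) * X n ω / n| ≤ 1 * 3 :=
            mul_le_mul (hZbd ω h n) h3 (abs_nonneg _) (by norm_num)
        _ = 3 := by norm_num
    have hcross : ∫ ω, Z n ω * (η (n + 1) ω - X n ω / n) ∂μ = -(c * e n) := by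
      have h1 : ∫ ω, Z n ω * (η (n + 1) ω - X n ω / n) ∂μ =
          ∫ ω, Z n ω * η (n + 1) ω ∂μ - ∫ ω, Z n ω * (X n ω / n) ∂μ := by
        rw [← integral_sub hZη_int hZX_int]
        apply integral_congr_ae
        filter_upwards with ω
        ring
      rw [h1, hkey n hn, ← integral_sub hZq_int hZX_int]
      have h2 : ∀ ω, Z n ω * (q + (p - q) * X n ω / n) - Z n ω * (X n ω / n) =
          -(c * Z n ω ^ 2) := by
        intro ω
        have hZeq : Z n ω = X n ω / n - L := rfl
        have hpq : p - q = 1 - c := by rw [hcdef]; ring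
        have hqe : q = c * L := hLc.symm
        rw [hZeq, hpq, hqe]
        ring
      calc ∫ ω, (Z n ω * (q + (p - q) * X n ω / n) - Z n ω * (X n ω / n)) ∂μ
          = ∫ ω, -(c * Z n ω ^ 2) ∂μ := by
            apply integral_congr_ae
            filter_upwards with ω
            rw [h2 ω]
        _ = -(c * e n) := by
            rw [integral_neg, integral_const_mul, hedef]
    -- the quadratic term
    have hDsq : ∫ ω, (η (n + 1) ω - X n ω / n) ^ 2 ∂μ ≤ 4 := by
      calc ∫ ω, (η (n + 1) ω - X n ω / n) ^ 2 ∂μ ≤ ∫ _ω, (4:ℝ) ∂μ := by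
            apply integral_mono_ae _ (integrable_const 4)
            · filter_upwards [hDbd] with ω h
              calc (η (n + 1) ω - X n ω / n) ^ 2 = |η (n + 1) ω - X n ω / n| ^ 2 :=
                    (sq_abs _).symm
                _ ≤ 2 ^ 2 := pow_le_pow_left₀ (abs_nonneg _) h 2
                _ = 4 := by norm_num
            · apply intb _ 4 (hDm.pow_const 2)
              filter_upwards [hDbd] with ω h
              rw [abs_pow]
              calc |η (n + 1) ω - X n ω / n| ^ 2 ≤ 2 ^ 2 := pow_le_pow_left₀ (abs_nonneg _) h 2
                _ = 4 := by norm_num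
        _ = 4 := by simp
    rw [hexp, hcross]
    have hfrac : (0:ℝ) < (n:ℝ) + 1 := by positivity
    have h5 : (2 / ((n:ℝ) + 1)) * -(c * e n) = -(2 * c * e n / ((n:ℝ) + 1)) := by ring
    have h6 : (1 / ((n:ℝ) + 1) ^ 2) * ∫ ω, (η (n + 1) ω - X n ω / n) ^ 2 ∂μ ≤
        4 / ((n:ℝ) + 1) ^ 2 := by
      rw [div_eq_mul_inv 4, mul_comm (4:ℝ), ← one_div]
      exact mul_le_mul_of_nonneg_left hDsq (by positivity)
    push_cast
    push_cast at h5 h6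
    linarith
  -- telescoping: partial sums of e n / (n+1) are bounded
  have htel : ∀ N : ℕ, ∑ n ∈ Finset.range N, 2 * c * e (n + 1) / ((n : ℝ) + 2) + e (N + 1) ≤
      e 1 + ∑ n ∈ Finset.range N, 4 / ((n : ℝ) + 2) ^ 2 := by
    intro N
    induction N with
    | zero => simp
    | succ N ih =>
      rw [Finset.sum_range_succ, Finset.sum_range_succ]
      have h := hrec (N + 1) (by omega)
      have hcast : ((N : ℝ) + 1 + 1) = (N : ℝ) + 2 := by ring
      push_cast at h ⊢
      rw [hcast] at h
      linarith
  have hTsum : Summable (fun n : ℕ => 4 / ((n : ℝ) + 2) ^ 2) := by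
    have h1 : Summable (fun n : ℕ => 1 / ((n : ℝ)) ^ 2) := by
      simpa using Real.summable_one_div_nat_pow.2 (by norm_num : 1 < 2)
    have h2 : Summable (fun n : ℕ => 1 / (((n + 2 : ℕ)) : ℝ) ^ 2) :=
      (summable_nat_add_iff 2).2 h1
    apply Summable.congr (h2.mul_left 4)
    intro n
    push_cast
    ring
  set T : ℝ := ∑' n : ℕ, 4 / ((n : ℝ) + 2) ^ 2 with hTdef
  have hsum1 : Summable (fun n : ℕ => e (n + 1) / ((n : ℝ) + 2)) := by
    apply summable_of_sum_range_le (c := (e 1 + T) / (2 * c))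
    · intro n
      have := he0 (n + 1)
      positivity
    · intro N
      have h1 := htel N
      have h2 : ∑ n ∈ Finset.range N, 4 / ((n : ℝ) + 2) ^ 2 ≤ T := by
        apply Summable.sum_le_tsum _ (fun n _ => by positivity) hTsum
      have h3 : ∑ n ∈ Finset.range N, 2 * c * e (n + 1) / ((n : ℝ) + 2) =
          2 * c * ∑ n ∈ Finset.range N, e (n + 1) / ((n : ℝ) + 2) := by
        rw [Finset.mul_sum]
        apply Finset.sum_congr rfl
        intro n _
        ring
      have h4 := he0 (N + 1)
      rw [le_div_iff₀ (by positivity)]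
      rw [h3] at h1
      have h5 : (∑ n ∈ Finset.range N, e (n + 1) / ((n : ℝ) + 2)) * (2 * c) =
          2 * c * ∑ n ∈ Finset.range N, e (n + 1) / ((n : ℝ) + 2) := mul_comm _ _
      linarith
  have hsum2 : Summable (fun n : ℕ => e n / ((n : ℝ) + 1)) := by
    rw [← summable_nat_add_iff 1]
    apply Summable.congr hsum1
    intro n
    push_cast
    ring_nf
  -- a.e. summability of the series of squares
  have haesum : ∀ᵐ ω ∂μ, Summable (fun n : ℕ => Z n ω ^ 2 / ((n : ℝ) + 1)) := by
    have hgm : ∀ n : ℕ, Measurable (fun ω => ENNReal.ofReal (Z n ω ^ 2 / ((n : ℝ) + 1))) :=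
      fun n => (((hZm n).pow_const 2).div_const _).ennreal_ofReal
    have hlin : ∫⁻ ω, ∑' n, ENNReal.ofReal (Z n ω ^ 2 / ((n : ℝ) + 1)) ∂μ =
        ∑' n, ∫⁻ ω, ENNReal.ofReal (Z n ω ^ 2 / ((n : ℝ) + 1)) ∂μ :=
      lintegral_tsum (fun n => (hgm n).aemeasurable)
    have hone : ∀ n : ℕ, ∫⁻ ω, ENNReal.ofReal (Z n ω ^ 2 / ((n : ℝ) + 1)) ∂μ =
        ENNReal.ofReal (e n / ((n : ℝ) + 1)) := by
      intro n
      rw [← ofReal_integral_eq_lintegral_ofReal ((hZsq_int n).div_const _)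
        (Filter.Eventually.of_forall fun ω => by positivity)]
      rw [integral_div]
    have hfin : ∫⁻ ω, ∑' n, ENNReal.ofReal (Z n ω ^ 2 / ((n : ℝ) + 1)) ∂μ < ⊤ := by
      rw [hlin]
      simp_rw [hone]
      rw [← ENNReal.ofReal_tsum_of_nonneg
        (fun n => div_nonneg (he0 n) (by positivity)) hsum2]
      exact ENNReal.ofReal_lt_top
    have hae := ae_lt_top (Measurable.ennreal_tsum hgm) hfin.ne
    filter_upwards [hae] with ω hω
    have hsum' := ENNReal.summable_toReal hω.ne
    apply Summable.congr hsum'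
    intro n
    exact ENNReal.toReal_ofReal (by positivity)
  -- conclusion
  filter_upwards [hη01, haesum] with ω hω hsumω
  have hz : ∀ n : ℕ, 1 ≤ n → |Z (n + 1) ω - Z n ω| ≤ 2 / ((n : ℝ) + 1) := by
    intro n hn
    have hn0 : (0 : ℝ) < n := by exact_mod_cast hn
    rw [hZsucc n hn ω, add_sub_cancel_left, abs_div,
      abs_of_nonneg (by positivity : (0:ℝ) ≤ (n:ℝ) + 1)]
    gcongr
    have h1 : |η (n + 1) ω| ≤ 1 := by rcases hω (n + 1) (by omega) with h | h <;> simp [h]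
    obtain ⟨hx0, hx1⟩ := hXbd ω hω n
    have h2 : |X n ω / n| ≤ 1 := by
      rw [abs_of_nonneg (div_nonneg hx0 hn0.le)]
      exact (div_le_one hn0).2 hx1
    calc |η (n + 1) ω - X n ω / n| ≤ |η (n + 1) ω| + |X n ω / n| := abs_sub _ _
      _ ≤ 1 + 1 := add_le_add h1 h2
      _ = 2 := by norm_num
  have htend := aux_det (fun n => Z n ω) hz hsumω
  have heq : ∀ n : ℕ, Z n ω + L = walkPos η n ω / n := by
    intro n
    show X n ω / n - L + L = walkPos η n ω / n
    rw [sub_add_cancel]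
    rfl
  have h2 : Tendsto (fun n : ℕ => Z n ω + L) atTop (nhds (0 + L)) :=
    htend.add_const L
  rw [zero_add] at h2
  exact Tendsto.congr heq h2
end
end

section
/- Let $(X_n)$ be the minimal random walk with $q = 0$ and $0 < p < 1$. Then for all $n \geq 1$, $\mathbb{E}[X_n^4] = \frac{24s\,\Gamma(n+4p)}{\Gamma(n)\Gamma(1+4p)} - \frac{36s\,\Gamma(n+3p)}{\Gamma(n)\Gamma(1+3p)} + \frac{14s\,\Gamma(n+2p)}{\Gamma(n)\Gamma(1+2p)} - \frac{s\,\Gamma(n+p)}{\Gamma(n)\Gamma(1+p)}$. -/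
open MeasureTheory ProbabilityTheory Filter Real BoundedContinuousFunction

noncomputable section

def mSig {Ω : Type*} (η : ℕ → Ω → ℝ) (n : ℕ) : MeasurableSpace Ω :=
  ⨆ i ∈ Finset.Icc 1 n, MeasurableSpace.comap (η i) inferInstance

section Aux
variable {Ω : Type*} [mΩ : MeasurableSpace Ω] (μ : Measure Ω)
    [IsProbabilityMeasure μ] (p s : ℝ) (η : ℕ → Ω → ℝ)
set_option linter.unusedSectionVars false

lemma MRW.ae_vals (hrw : IsMinimalRW μ p 0 s η) :
    ∀ᵐ ω ∂μ, ∀ k, 1 ≤ k → (η k ω = 0 ∨ η k ω = 1) := by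
  have : ∀ᵐ ω ∂μ, ∀ k : ℕ, (η (k+1) ω = 0 ∨ η (k+1) ω = 1) :=
    ae_all_iff.2 fun k => hrw.vals (k+1) (Nat.le_add_left 1 k)
  filter_upwards [this] with ω h k hk
  have := h (k - 1)
  rwa [Nat.sub_add_cancel hk] at this

lemma MRW.measX (hrw : IsMinimalRW μ p 0 s η) (n : ℕ) : Measurable (walkPos η n) :=
  Finset.measurable_sum _ fun k _ => hrw.meas k

lemma MRW.bddX (hrw : IsMinimalRW μ p 0 s η) (n : ℕ) :
    ∀ᵐ ω ∂μ, ‖walkPos η n ω‖ ≤ n := by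
  filter_upwards [MRW.ae_vals μ p s η hrw] with ω h
  have hb : ∀ k ∈ Finset.Icc 1 n, ‖η k ω‖ ≤ 1 := by
    intro k hk
    rcases h k (Finset.mem_Icc.1 hk).1 with h0 | h0 <;> simp [h0]
  calc ‖walkPos η n ω‖ ≤ ∑ k ∈ Finset.Icc 1 n, ‖η k ω‖ := norm_sum_le _ _
    _ ≤ ∑ k ∈ Finset.Icc 1 n, (1:ℝ) := Finset.sum_le_sum hb
    _ = n := by simp

lemma MRW.intX (hrw : IsMinimalRW μ p 0 s η) (j n : ℕ) :
    Integrable (fun ω => (walkPos η n ω) ^ j) μ := by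
  refine Integrable.mono' (integrable_const ((n:ℝ)^j))
    ((MRW.measX μ p s η hrw n).pow_const j).aestronglyMeasurable ?_
  filter_upwards [MRW.bddX μ p s η hrw n] with ω h
  rw [norm_pow]
  exact pow_le_pow_left₀ (norm_nonneg _) h j

lemma MRW.intXe (hrw : IsMinimalRW μ p 0 s η) (j n : ℕ) :
    Integrable (fun ω => (walkPos η n ω) ^ j * η (n+1) ω) μ := by
  refine Integrable.mono' (integrable_const ((n:ℝ)^j))
    (((MRW.measX μ p s η hrw n).pow_const j).mul (hrw.meas (n+1))).aestronglyMeasurable ?_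
  filter_upwards [MRW.bddX μ p s η hrw n, hrw.vals (n+1) (Nat.le_add_left 1 n)] with ω h he
  have h1 : ‖η (n+1) ω‖ ≤ 1 := by rcases he with h0 | h0 <;> simp [h0]
  calc ‖walkPos η n ω ^ j * η (n+1) ω‖ = ‖walkPos η n ω‖^j * ‖η (n+1) ω‖ := by
        rw [norm_mul, norm_pow]
    _ ≤ (n:ℝ)^j * 1 := by
        exact mul_le_mul (pow_le_pow_left₀ (norm_nonneg _) h j) h1 (norm_nonneg _) (by positivity)
    _ = (n:ℝ)^j := mul_one _

lemma MRW.step (hrw : IsMinimalRW μ p 0 s η) (j n : ℕ) (hn : 1 ≤ n) :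
    ∫ ω, (walkPos η n ω) ^ j * η (n+1) ω ∂μ
      = (p / n) * ∫ ω, (walkPos η n ω) ^ (j+1) ∂μ := by
  have hm : mSig η n ≤ mΩ := by
    rw [mSig]
    refine iSup₂_le fun i _ => ?_
    exact MeasurableSpace.comap_le_iff_le_map.2 (Measurable.le_map (hrw.meas i))
  have hXm : Measurable[mSig η n] (walkPos η n) := by
    refine Finset.measurable_sum _ fun k hk => ?_
    have : Measurable[MeasurableSpace.comap (η k) inferInstance] (η k) :=
      Measurable.of_comap_le le_rfl
    rw [mSig]
    exact this.mono (le_iSup₂ (f := fun i _ => MeasurableSpace.comap (η i) inferInstance) k hk)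
      le_rfl
  have hfm : StronglyMeasurable[mSig η n] (fun ω => (walkPos η n ω) ^ j) :=
    (hXm.pow_const j).stronglyMeasurable
  have hηint : Integrable (η (n+1)) μ := by
    refine Integrable.mono' (integrable_const (1:ℝ)) (hrw.meas (n+1)).aestronglyMeasurable ?_
    filter_upwards [hrw.vals (n+1) (Nat.le_add_left 1 n)] with ω he
    rcases he with h0 | h0 <;> simp [h0]
  have hmulint : Integrable (fun ω => (walkPos η n ω) ^ j * η (n+1) ω) μ :=
    MRW.intXe μ p s η hrw j n
  haveI : SigmaFinite (μ.trim hm) := by infer_instance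
  have h1 : ∫ ω, (walkPos η n ω) ^ j * η (n+1) ω ∂μ
      = ∫ ω, (μ[(fun ω => (walkPos η n ω) ^ j) * η (n+1) | mSig η n]) ω ∂μ :=
    (integral_condExp hm).symm
  have h2 : μ[(fun ω => (walkPos η n ω) ^ j) * η (n+1) | mSig η n]
      =ᵐ[μ] (fun ω => (walkPos η n ω) ^ j) * μ[η (n+1) | mSig η n] :=
    condExp_mul_of_stronglyMeasurable_left hfm hmulint hηint
  have hcond := hrw.cond n hn
  rw [show (⨆ i ∈ Finset.Icc 1 n, MeasurableSpace.comap (η i) inferInstance) = mSig η n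
    from rfl] at hcond
  have h3 : (fun ω => (walkPos η n ω) ^ j) * μ[η (n+1) | mSig η n]
      =ᵐ[μ] fun ω => (p / n) * (walkPos η n ω) ^ (j+1) := by
    filter_upwards [hcond] with ω hc
    simp only [Pi.mul_apply]
    rw [hc]
    simp only [walkPos]
    ring
  rw [h1, integral_congr_ae (h2.trans h3), integral_const_mul]

lemma MRW.base (hrw : IsMinimalRW μ p 0 s η) (j : ℕ) (hj : 1 ≤ j) :
    ∫ ω, (walkPos η 1 ω) ^ j ∂μ = s := by
  have hset : MeasurableSet ((η 1) ⁻¹' {1}) := hrw.meas 1 (measurableSet_singleton 1)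
  have hae : (fun ω => (walkPos η 1 ω) ^ j)
      =ᵐ[μ] ((η 1) ⁻¹' {1}).indicator (fun _ => (1:ℝ)) := by
    filter_upwards [hrw.vals 1 le_rfl] with ω he
    have hw : walkPos η 1 ω = η 1 ω := by simp [walkPos]
    rcases he with h0 | h0
    · have : ω ∉ (η 1) ⁻¹' {1} := by simp [Set.mem_preimage, h0]
      rw [hw, h0, Set.indicator_of_notMem this, zero_pow (by omega)]
    · have : ω ∈ (η 1) ⁻¹' {1} := by simp [Set.mem_preimage, h0]
      rw [hw, h0, Set.indicator_of_mem this, one_pow]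
  rw [integral_congr_ae hae, integral_indicator_const _ hset]
  have : (η 1) ⁻¹' {1} = {ω | η 1 ω = 1} := by ext ω; simp
  rw [this]
  simp [hrw.init, smul_eq_mul]
  exact hrw.init

lemma MRW.sum_succ (n : ℕ) (hn : 1 ≤ n) (ω : Ω) :
    walkPos η (n+1) ω = walkPos η n ω + η (n+1) ω := by
  rw [walkPos, walkPos, Finset.sum_Icc_succ_top (by omega)]


lemma isum1 {f g1 : Ω → ℝ} (hf : Integrable f μ) (h1 : Integrable g1 μ) :
    ∫ ω, f ω + g1 ω ∂μ = ∫ ω, f ω ∂μ + ∫ ω, g1 ω ∂μ := integral_add hf h1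

lemma isum2 {f g1 g2 : Ω → ℝ} (c1 : ℝ) (hf : Integrable f μ) (h1 : Integrable g1 μ)
    (h2 : Integrable g2 μ) :
    ∫ ω, f ω + (c1 * g1 ω + g2 ω) ∂μ
      = ∫ ω, f ω ∂μ + (c1 * ∫ ω, g1 ω ∂μ + ∫ ω, g2 ω ∂μ) := by
  have h12 : Integrable (fun ω => c1 * g1 ω + g2 ω) μ := (h1.const_mul c1).add h2
  rw [integral_add hf h12, integral_add (h1.const_mul c1) h2, integral_const_mul]

lemma isum3 {f g1 g2 g3 : Ω → ℝ} (c1 c2 : ℝ) (hf : Integrable f μ) (h1 : Integrable g1 μ)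
    (h2 : Integrable g2 μ) (h3 : Integrable g3 μ) :
    ∫ ω, f ω + (c1 * g1 ω + (c2 * g2 ω + g3 ω)) ∂μ
      = ∫ ω, f ω ∂μ + (c1 * ∫ ω, g1 ω ∂μ + (c2 * ∫ ω, g2 ω ∂μ + ∫ ω, g3 ω ∂μ)) := by
  have h23 : Integrable (fun ω => c2 * g2 ω + g3 ω) μ := (h2.const_mul c2).add h3
  have h123 : Integrable (fun ω => c1 * g1 ω + (c2 * g2 ω + g3 ω)) μ :=
    (h1.const_mul c1).add h23
  rw [integral_add hf h123, integral_add (h1.const_mul c1) h23, integral_const_mul,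
    integral_add (h2.const_mul c2) h3, integral_const_mul]

lemma isum4 {f g1 g2 g3 g4 : Ω → ℝ} (c1 c2 c3 : ℝ) (hf : Integrable f μ)
    (h1 : Integrable g1 μ) (h2 : Integrable g2 μ) (h3 : Integrable g3 μ)
    (h4 : Integrable g4 μ) :
    ∫ ω, f ω + (c1 * g1 ω + (c2 * g2 ω + (c3 * g3 ω + g4 ω))) ∂μ
      = ∫ ω, f ω ∂μ
        + (c1 * ∫ ω, g1 ω ∂μ + (c2 * ∫ ω, g2 ω ∂μ + (c3 * ∫ ω, g3 ω ∂μ + ∫ ω, g4 ω ∂μ))) := by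
  have h34 : Integrable (fun ω => c3 * g3 ω + g4 ω) μ := (h3.const_mul c3).add h4
  have h234 : Integrable (fun ω => c2 * g2 ω + (c3 * g3 ω + g4 ω)) μ :=
    (h2.const_mul c2).add h34
  have h1234 : Integrable (fun ω => c1 * g1 ω + (c2 * g2 ω + (c3 * g3 ω + g4 ω))) μ :=
    (h1.const_mul c1).add h234
  rw [integral_add hf h1234, integral_add (h1.const_mul c1) h234, integral_const_mul,
    integral_add (h2.const_mul c2) h34, integral_const_mul,
    integral_add (h3.const_mul c3) h4, integral_const_mul]

lemma MRW.rec1 (hrw : IsMinimalRW μ p 0 s η) (n : ℕ) (hn : 1 ≤ n) :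
    ∫ ω, (walkPos η (n+1) ω) ^ 1 ∂μ
      = ∫ ω, (walkPos η n ω) ^ 1 ∂μ + (p/n) * ∫ ω, (walkPos η n ω) ^ 1 ∂μ := by
  have hpt : (fun ω => (walkPos η (n+1) ω) ^ 1)
      =ᵐ[μ] fun ω => (walkPos η n ω) ^ 1 + (walkPos η n ω) ^ 0 * η (n+1) ω := by
    filter_upwards [hrw.vals (n+1) (Nat.le_add_left 1 n)] with ω he
    rw [MRW.sum_succ η n hn ω]
    rcases he with h0 | h0 <;> rw [h0] <;> ring
  rw [integral_congr_ae hpt,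
    isum1 μ (MRW.intX μ p s η hrw 1 n) (MRW.intXe μ p s η hrw 0 n),
    MRW.step μ p s η hrw 0 n hn]

lemma MRW.rec2 (hrw : IsMinimalRW μ p 0 s η) (n : ℕ) (hn : 1 ≤ n) :
    ∫ ω, (walkPos η (n+1) ω) ^ 2 ∂μ
      = ∫ ω, (walkPos η n ω) ^ 2 ∂μ
        + (p/n) * (2 * ∫ ω, (walkPos η n ω) ^ 2 ∂μ + ∫ ω, (walkPos η n ω) ^ 1 ∂μ) := by
  have hpt : (fun ω => (walkPos η (n+1) ω) ^ 2)
      =ᵐ[μ] fun ω => (walkPos η n ω) ^ 2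
        + (2 * ((walkPos η n ω) ^ 1 * η (n+1) ω) + (walkPos η n ω) ^ 0 * η (n+1) ω) := by
    filter_upwards [hrw.vals (n+1) (Nat.le_add_left 1 n)] with ω he
    rw [MRW.sum_succ η n hn ω]
    rcases he with h0 | h0 <;> rw [h0] <;> ring
  rw [integral_congr_ae hpt,
    isum2 μ 2 (MRW.intX μ p s η hrw 2 n) (MRW.intXe μ p s η hrw 1 n)
      (MRW.intXe μ p s η hrw 0 n),
    MRW.step μ p s η hrw 1 n hn, MRW.step μ p s η hrw 0 n hn]
  ring

lemma MRW.rec3 (hrw : IsMinimalRW μ p 0 s η) (n : ℕ) (hn : 1 ≤ n) :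
    ∫ ω, (walkPos η (n+1) ω) ^ 3 ∂μ
      = ∫ ω, (walkPos η n ω) ^ 3 ∂μ
        + (p/n) * (3 * ∫ ω, (walkPos η n ω) ^ 3 ∂μ + 3 * ∫ ω, (walkPos η n ω) ^ 2 ∂μ
            + ∫ ω, (walkPos η n ω) ^ 1 ∂μ) := by
  have hpt : (fun ω => (walkPos η (n+1) ω) ^ 3)
      =ᵐ[μ] fun ω => (walkPos η n ω) ^ 3
        + (3 * ((walkPos η n ω) ^ 2 * η (n+1) ω)
          + (3 * ((walkPos η n ω) ^ 1 * η (n+1) ω) + (walkPos η n ω) ^ 0 * η (n+1) ω)) := by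
    filter_upwards [hrw.vals (n+1) (Nat.le_add_left 1 n)] with ω he
    rw [MRW.sum_succ η n hn ω]
    rcases he with h0 | h0 <;> rw [h0] <;> ring
  rw [integral_congr_ae hpt,
    isum3 μ 3 3 (MRW.intX μ p s η hrw 3 n) (MRW.intXe μ p s η hrw 2 n)
      (MRW.intXe μ p s η hrw 1 n) (MRW.intXe μ p s η hrw 0 n),
    MRW.step μ p s η hrw 2 n hn, MRW.step μ p s η hrw 1 n hn, MRW.step μ p s η hrw 0 n hn]
  ring

lemma MRW.rec4 (hrw : IsMinimalRW μ p 0 s η) (n : ℕ) (hn : 1 ≤ n) :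
    ∫ ω, (walkPos η (n+1) ω) ^ 4 ∂μ
      = ∫ ω, (walkPos η n ω) ^ 4 ∂μ
        + (p/n) * (4 * ∫ ω, (walkPos η n ω) ^ 4 ∂μ + 6 * ∫ ω, (walkPos η n ω) ^ 3 ∂μ
            + 4 * ∫ ω, (walkPos η n ω) ^ 2 ∂μ + ∫ ω, (walkPos η n ω) ^ 1 ∂μ) := by
  have hpt : (fun ω => (walkPos η (n+1) ω) ^ 4)
      =ᵐ[μ] fun ω => (walkPos η n ω) ^ 4
        + (4 * ((walkPos η n ω) ^ 3 * η (n+1) ω)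
          + (6 * ((walkPos η n ω) ^ 2 * η (n+1) ω)
            + (4 * ((walkPos η n ω) ^ 1 * η (n+1) ω) + (walkPos η n ω) ^ 0 * η (n+1) ω))) := by
    filter_upwards [hrw.vals (n+1) (Nat.le_add_left 1 n)] with ω he
    rw [MRW.sum_succ η n hn ω]
    rcases he with h0 | h0 <;> rw [h0] <;> ring
  rw [integral_congr_ae hpt,
    isum4 μ 4 6 4 (MRW.intX μ p s η hrw 4 n) (MRW.intXe μ p s η hrw 3 n)
      (MRW.intXe μ p s η hrw 2 n) (MRW.intXe μ p s η hrw 1 n) (MRW.intXe μ p s η hrw 0 n),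
    MRW.step μ p s η hrw 3 n hn, MRW.step μ p s η hrw 2 n hn, MRW.step μ p s η hrw 1 n hn,
    MRW.step μ p s η hrw 0 n hn]
  ring

end Aux

lemma aSeq_one {α : ℝ} (hα : 0 < α) : aSeq α 1 = 1 := by
  have h : Real.Gamma (1 + α) ≠ 0 := (Real.Gamma_pos_of_pos (by linarith)).ne'
  simp [aSeq, Real.Gamma_one, h]

lemma aSeq_succ {α : ℝ} (hα : 0 < α) {n : ℕ} (hn : 1 ≤ n) :
    aSeq α (n + 1) = aSeq α n * ((n + α) / n) := by
  have hn0 : (0:ℝ) < n := by exact_mod_cast hn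
  have h1 : ((n:ℝ) + 1) + α = ((n:ℝ) + α) + 1 := by ring
  have h2 : Real.Gamma (((n:ℝ)+1) + α) = ((n:ℝ) + α) * Real.Gamma ((n:ℝ) + α) := by
    rw [h1, Real.Gamma_add_one (by positivity)]
  have h3 : Real.Gamma ((n:ℝ)+1) = (n:ℝ) * Real.Gamma n := Real.Gamma_add_one hn0.ne'
  have hΓn : Real.Gamma (n:ℝ) ≠ 0 := (Real.Gamma_pos_of_pos hn0).ne'
  have hΓα : Real.Gamma (1 + α) ≠ 0 := (Real.Gamma_pos_of_pos (by linarith)).ne'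
  simp only [aSeq, Nat.cast_add, Nat.cast_one, h2, h3]
  field_simp

/-- Fourth moment of the minimal random walk with `q = 0`. -/
theorem minimalRW_q0_fourth_moment {Ω : Type*} [MeasurableSpace Ω] (μ : Measure Ω)
    [IsProbabilityMeasure μ] (p s : ℝ) (hp0 : 0 < p) (hp1 : p < 1)
    (hs : s ∈ Set.Icc (0:ℝ) 1) (η : ℕ → Ω → ℝ) (hrw : IsMinimalRW μ p 0 s η)
    (n : ℕ) (hn : 1 ≤ n) :
    ∫ ω, (walkPos η n ω) ^ 4 ∂μ
      = 24 * s * Real.Gamma (n + 4 * p) / (Real.Gamma n * Real.Gamma (1 + 4 * p))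
        - 36 * s * Real.Gamma (n + 3 * p) / (Real.Gamma n * Real.Gamma (1 + 3 * p))
        + 14 * s * Real.Gamma (n + 2 * p) / (Real.Gamma n * Real.Gamma (1 + 2 * p))
        - s * Real.Gamma (n + p) / (Real.Gamma n * Real.Gamma (1 + p)) := by
  have key : ∀ m : ℕ, 1 ≤ m →
      (∫ ω, (walkPos η m ω) ^ 1 ∂μ = s * aSeq p m
      ∧ ∫ ω, (walkPos η m ω) ^ 2 ∂μ = 2 * s * aSeq (2*p) m - s * aSeq p m
      ∧ ∫ ω, (walkPos η m ω) ^ 3 ∂μ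
          = 6 * s * aSeq (3*p) m - 6 * s * aSeq (2*p) m + s * aSeq p m
      ∧ ∫ ω, (walkPos η m ω) ^ 4 ∂μ
          = 24 * s * aSeq (4*p) m - 36 * s * aSeq (3*p) m + 14 * s * aSeq (2*p) m
            - s * aSeq p m) := by
    refine Nat.le_induction ?_ ?_
    · rw [aSeq_one hp0, aSeq_one (by linarith : (0:ℝ) < 2*p),
        aSeq_one (by linarith : (0:ℝ) < 3*p), aSeq_one (by linarith : (0:ℝ) < 4*p),
        MRW.base μ p s η hrw 1 le_rfl, MRW.base μ p s η hrw 2 (by norm_num),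
        MRW.base μ p s η hrw 3 (by norm_num), MRW.base μ p s η hrw 4 (by norm_num)]
      refine ⟨by ring, by ring, by ring, by ring⟩
    · intro m hm ih
      obtain ⟨ih1, ih2, ih3, ih4⟩ := ih
      have hm0 : ((m:ℝ)) ≠ 0 := by
        have : (0:ℝ) < m := by exact_mod_cast hm
        exact this.ne'
      rw [MRW.rec1 μ p s η hrw m hm, MRW.rec2 μ p s η hrw m hm, MRW.rec3 μ p s η hrw m hm,
        MRW.rec4 μ p s η hrw m hm, ih1, ih2, ih3, ih4,
        aSeq_succ hp0 hm, aSeq_succ (by linarith : (0:ℝ) < 2*p) hm,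
        aSeq_succ (by linarith : (0:ℝ) < 3*p) hm, aSeq_succ (by linarith : (0:ℝ) < 4*p) hm]
      refine ⟨by field_simp, by field_simp; ring, by field_simp; ring,
        by field_simp; ring⟩
  have h4 := (key n hn).2.2.2
  rw [h4]
  simp only [aSeq]
  ring
end
end
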